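/- The metric g₁ = (dz - x dy)² + dy² + dx² on ℝ³ generates the self-similar Ricci flow solution g(t) = t^{-1/3}(dz - x dy)² + t^{1/3} dy² + t^{1/3} dx², and this solution satisfies g(t) = t φ_t^* g₁ where φ_t(x,y,z) = (t^{-1/3} x, t^{-1/3} y, t^{-2/3} z). -/
import Mathlib


open Matrix

/-- The metric `a (dz - x dy)² + b (dy² + dx²)` on ℝ³ in the coordinate basis
`(dx, dy, dz)`, as a matrix-valued function of the point `p = (x,y,z)`. -/
noncomputable def nilMetricMat (a b : ℝ) (p : ℝ × ℝ × ℝ) : Matrix (Fin 3) (Fin 3) ℝ :=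
  !![b, 0, 0;
     0, b + a * p.1 ^ 2, -(a * p.1);
     0, -(a * p.1), a]

/-- The time-`t` metric `g(t) = t^{-1/3}(dz - x dy)² + t^{1/3}(dy² + dx²)`. -/
noncomputable def nilSolitonFlow (t : ℝ) : ℝ × ℝ × ℝ → Matrix (Fin 3) (Fin 3) ℝ :=
  nilMetricMat (t ^ (-(1 / 3) : ℝ)) (t ^ ((1 / 3) : ℝ))

/-- The Nil soliton: `g₁ = (dz - x dy)² + dy² + dx²` generates the self-similar Ricci flow
solution `g(t) = t^{-1/3}(dz - x dy)² + t^{1/3}(dy² + dx²)`, i.e. `g(t) = t φ_t^* g₁` where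
`φ_t(x,y,z) = (t^{-1/3}x, t^{-1/3}y, t^{-2/3}z)`. The pullback is computed as
`Jᵀ g₁(φ_t p) J` with `J` the (diagonal) Jacobian of `φ_t`. -/
theorem nil_ricci_soliton :
    ∀ t : ℝ, 0 < t → ∀ p : ℝ × ℝ × ℝ,
      let φ : ℝ × ℝ × ℝ → ℝ × ℝ × ℝ :=
        fun q => (t ^ (-(1 / 3) : ℝ) * q.1, t ^ (-(1 / 3) : ℝ) * q.2.1,
          t ^ (-(2 / 3) : ℝ) * q.2.2)
      let J : Matrix (Fin 3) (Fin 3) ℝ :=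
        Matrix.diagonal ![t ^ (-(1 / 3) : ℝ), t ^ (-(1 / 3) : ℝ), t ^ (-(2 / 3) : ℝ)]
      t • (Jᵀ * nilMetricMat 1 1 (φ p) * J) = nilSolitonFlow t p := by
  intro t ht p φ J
  have hr : ∀ a b : ℝ, t ^ a * t ^ b = t ^ (a + b) := fun a b =>
    (Real.rpow_add ht a b).symm
  set s := t ^ ((1 / 3) : ℝ) with hs_def
  have hs : 0 < s := Real.rpow_pos_of_pos ht _
  have h1 : t ^ (-(1 / 3) : ℝ) = s⁻¹ := by
    rw [Real.rpow_neg ht.le]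
  have h2 : t ^ (-(2 / 3) : ℝ) = s⁻¹ * s⁻¹ := by
    rw [← h1, hr]; norm_num
  have h1' : t ^ ((-1 : ℝ) / 3) = s⁻¹ := by rw [neg_div]; exact h1
  have h2' : t ^ ((-2 : ℝ) / 3) = s⁻¹ * s⁻¹ := by rw [neg_div]; exact h2
  have hA : t ^ ((-3⁻¹ : ℝ)) = s⁻¹ := by rw [show ((-3⁻¹ : ℝ)) = -(1/3) by norm_num]; exact h1
  have hC : t ^ ((3⁻¹ : ℝ)) = s := by rw [show ((3⁻¹ : ℝ)) = 1/3 by norm_num]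
  have hB := h2
  have h3 : t = s ^ 3 := by
    rw [hs_def, ← Real.rpow_natCast (t ^ ((1/3):ℝ)) 3, ← Real.rpow_mul ht.le]
    norm_num
  ext i j
  fin_cases i <;> fin_cases j
  all_goals
    simp [nilMetricMat, nilSolitonFlow, J, φ, Matrix.mul_apply, Fin.sum_univ_three,
      Matrix.diagonal, Matrix.vecHead, Matrix.vecTail]
  all_goals
    simp only [hA, hB, hC, h2]
  all_goals rw [h3]
  all_goals field_simp
  all_goals ring
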